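/- Let g be a finite-dimensional Lie algebra over a field K of characteristic 0, D an invertible derivation of g, and let x·y := D⁻¹[x, Dy] be the associated left-symmetric product. Then g admits an invariant scalar product (i.e. a nondegenerate symmetric invariant bilinear form B) if and only if there exists a nondegenerate symmetric bilinear form ⟨·,·⟩ on g such that ⟨x·y, z⟩ + ⟨y, x·z⟩ = 0 for all x,y,z in g (i.e. the product x·y is metric-compatible with ⟨·,·⟩; together with x·y − y·x = [x,y] this says that x·y is the Levi-Civita connection of ⟨·,·⟩). The correspondence can be taken to be ⟨x,y⟩ = B(Dx,Dy) for all x,y in g. -/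

import Mathlib

/-- Let `D` be an invertible derivation of `g` and `x · y = D⁻¹ ⁅x, D y⁆` the associated
left-symmetric product.  Then `g` admits an invariant scalar product `B` if and only if there is
a nondegenerate symmetric bilinear form `⟨·,·⟩` with `⟨x·y, z⟩ + ⟨y, x·z⟩ = 0`; the
correspondence can be taken to be `⟨x, y⟩ = B (D x) (D y)`. -/
theorem stmt_2 (K : Type*) [Field K] [CharZero K]
    (g : Type*) [LieRing g] [LieAlgebra K g] [Module.Finite K g]
    (D : g ≃ₗ[K] g)
    (hD : ∀ x y : g, D ⁅x, y⁆ = ⁅D x, y⁆ + ⁅x, D y⁆)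
    (mul : g → g → g)
    (hmul : ∀ x y : g, mul x y = D.symm ⁅x, D y⁆) :
    ((∃ B : LinearMap.BilinForm K g, B.Nondegenerate ∧ (∀ x y : g, B x y = B y x) ∧
        ∀ x y z : g, B ⁅x, y⁆ z = B x ⁅y, z⁆) ↔
      (∃ m : LinearMap.BilinForm K g, m.Nondegenerate ∧ (∀ x y : g, m x y = m y x) ∧
        ∀ x y z : g, m (mul x y) z + m y (mul x z) = 0)) ∧
    (∀ B : LinearMap.BilinForm K g, B.Nondegenerate → (∀ x y : g, B x y = B y x) →
      (∀ x y z : g, B ⁅x, y⁆ z = B x ⁅y, z⁆) →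
      ∃ m : LinearMap.BilinForm K g, (∀ x y : g, m x y = B (D x) (D y)) ∧
        m.Nondegenerate ∧ (∀ x y : g, m x y = m y x) ∧
        ∀ x y z : g, m (mul x y) z + m y (mul x z) = 0) := by
  have key : ∀ B : LinearMap.BilinForm K g, B.Nondegenerate → (∀ x y : g, B x y = B y x) →
      (∀ x y z : g, B ⁅x, y⁆ z = B x ⁅y, z⁆) →
      ∃ m : LinearMap.BilinForm K g, (∀ x y : g, m x y = B (D x) (D y)) ∧
        m.Nondegenerate ∧ (∀ x y : g, m x y = m y x) ∧
        ∀ x y z : g, m (mul x y) z + m y (mul x z) = 0 := by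
    intro B hB hsym hinv
    refine ⟨B.compl₁₂ D.toLinearMap D.toLinearMap, fun x y => rfl, ?_, ?_, ?_⟩
    · refine (LinearMap.IsRefl.nondegenerate_iff_separatingLeft (B := B.compl₁₂ D.toLinearMap D.toLinearMap)
        (fun a b h => by
        simp only [LinearMap.compl₁₂_apply, LinearEquiv.coe_coe] at h ⊢; rw [hsym]; exact h)).mpr ?_
      intro x hx
      have h : ∀ z : g, B (D x) z = 0 := by
        intro z
        simpa using hx (D.symm z)
      have := hB.1 (D x) h
      exact D.injective (by simpa using this)
    · intro x y
      exact hsym (D x) (D y)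
    · intro x y z
      have h1 : (B.compl₁₂ D.toLinearMap D.toLinearMap) (mul x y) z = B ⁅x, D y⁆ (D z) := by
        simp [hmul, LinearMap.compl₁₂_apply]
      have h2 : (B.compl₁₂ D.toLinearMap D.toLinearMap) y (mul x z) = B (D y) ⁅x, D z⁆ := by
        simp [hmul, LinearMap.compl₁₂_apply]
      rw [h1, h2]
      have : B ⁅x, D y⁆ (D z) = - B (D y) ⁅x, D z⁆ := by
        rw [show ⁅x, D y⁆ = -⁅D y, x⁆ from (lie_skew x (D y)).symm]
        rw [map_neg, LinearMap.neg_apply, hinv]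
      rw [this]; ring
  refine ⟨⟨?_, ?_⟩, key⟩
  · rintro ⟨B, hB, hsym, hinv⟩
    obtain ⟨m, _, h⟩ := key B hB hsym hinv
    exact ⟨m, h⟩
  · rintro ⟨m, hm, hsym, hcomp⟩
    refine ⟨m.compl₁₂ D.symm.toLinearMap D.symm.toLinearMap, ?_, ?_, ?_⟩
    · refine (LinearMap.IsRefl.nondegenerate_iff_separatingLeft (B := m.compl₁₂ D.symm.toLinearMap D.symm.toLinearMap)
        (fun a b h => by
        simp only [LinearMap.compl₁₂_apply, LinearEquiv.coe_coe] at h ⊢; rw [hsym]; exact h)).mpr ?_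
      intro x hx
      have h : ∀ z : g, m (D.symm x) z = 0 := by
        intro z
        simpa using hx (D z)
      have := hm.1 (D.symm x) h
      exact D.symm.injective (by simpa using this)
    · intro x y
      exact hsym (D.symm x) (D.symm y)
    · intro x y z
      have skew : ∀ a u w : g,
          m (D.symm ⁅a, u⁆) (D.symm w) + m (D.symm u) (D.symm ⁅a, w⁆) = 0 := by
        intro a u w
        have := hcomp a (D.symm u) (D.symm w)
        simpa [hmul] using this
      have h1 := skew y x z
      have h2 : D.symm ⁅x, y⁆ = - D.symm ⁅y, x⁆ := by
        rw [← lie_skew x y, map_neg]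
      simp only [LinearMap.compl₁₂_apply, LinearEquiv.coe_coe]
      calc m (D.symm ⁅x, y⁆) (D.symm z) = - m (D.symm ⁅y, x⁆) (D.symm z) := by
            rw [h2, map_neg, LinearMap.neg_apply]
        _ = m (D.symm x) (D.symm ⁅y, z⁆) := by linear_combination -h1
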